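/- Let G be a weighted undirected graph and H a (1+ε, β)-hopset for G, i.e., for all u,v ∈ V: d_G(u,v) ≤ d_{G∪H}^{(β)}(u,v) ≤ (1+ε)·d_G(u,v). Let A be the adjacency matrix of G ∪ H, S ⊆ V, B^{(1)} = A restricted to rows in S, and inductively let B^{(t+1)} be any (1+1/R)-approximation of B^{(t)} ⋆ A. Then for all u ∈ S and v ∈ V, B^{(β)}_{uv} satisfies d_G(u,v) ≤ B^{(β)}_{uv} ≤ (1+1/R)^{β-1}·(1+ε)·d_G(u,v). -/

import Mathlib

open scoped ENNReal

/-- `hopDist w t u v` is the minimum weight of a `u`–`v` walk with at most `t`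
edges, where `w` is the (extended-real-valued) adjacency matrix. -/
noncomputable def hopDist {V : Type*} [Fintype V] [DecidableEq V]
    (w : V → V → ℝ≥0∞) : ℕ → V → V → ℝ≥0∞
  | 0 => fun u v => if u = v then 0 else ⊤
  | t + 1 => fun u v => min (hopDist w t u v) (⨅ k, hopDist w t u k + w k v)

/-- The (unbounded) graph distance induced by adjacency matrix `w`. -/
noncomputable def gDist {V : Type*} [Fintype V] [DecidableEq V]
    (w : V → V → ℝ≥0∞) (u v : V) : ℝ≥0∞ :=
  ⨅ t : ℕ, hopDist w t u v

lemma gDist_le_w {V : Type*} [Fintype V] [DecidableEq V]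
    (w : V → V → ℝ≥0∞) (u v : V) : gDist w u v ≤ w u v := by
  refine (iInf_le _ 1).trans ?_
  show min _ _ ≤ _
  refine min_le_of_right_le ((iInf_le _ u).trans ?_)
  simp [hopDist]

lemma hopDist_add_le {V : Type*} [Fintype V] [DecidableEq V]
    (w : V → V → ℝ≥0∞) (s t : ℕ) (u k v : V) :
    hopDist w (s + t) u v ≤ hopDist w s u k + hopDist w t k v := by
  induction t generalizing v with
  | zero =>
    by_cases h : k = v
    · subst h; simp [hopDist]
    · simp [hopDist, h]
  | succ t ih =>
    show hopDist w (s + t + 1) u v ≤ _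
    have h1 : hopDist w (s + t + 1) u v ≤ hopDist w s u k + hopDist w t k v :=
      (min_le_left _ _).trans (ih v)
    have h2 : hopDist w (s + t + 1) u v ≤
        hopDist w s u k + ⨅ m, hopDist w t k m + w m v := by
      rw [ENNReal.add_iInf]
      refine le_iInf fun m => ?_
      refine (min_le_right _ _).trans ((iInf_le _ m).trans ?_)
      rw [← add_assoc]
      exact add_le_add (ih m) le_rfl
    rcases le_total (hopDist w t k v) (⨅ m, hopDist w t k m + w m v) with h | h
    · calc hopDist w (s + t + 1) u v ≤ _ := h1
        _ = hopDist w s u k + hopDist w (t + 1) k v := by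
            show _ = _ + min _ _; rw [min_eq_left h]
    · calc hopDist w (s + t + 1) u v ≤ _ := h2
        _ = hopDist w s u k + hopDist w (t + 1) k v := by
            show _ = _ + min _ _; rw [min_eq_right h]

lemma gDist_triangle {V : Type*} [Fintype V] [DecidableEq V]
    (w : V → V → ℝ≥0∞) (u k v : V) :
    gDist w u v ≤ gDist w u k + gDist w k v := by
  simp only [gDist]
  rw [ENNReal.iInf_add]
  refine le_iInf fun s => ?_
  rw [ENNReal.add_iInf]
  refine le_iInf fun t => ?_
  exact (iInf_le _ (s + t)).trans (hopDist_add_le w s t u k v)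

/-- iterating `β - 1` approximate distance products with the
adjacency matrix of `G ∪ H`, starting from the source rows, yields
`(1+1/R)^(β-1)·(1+ε)`-approximate distances for `S × V`, where `H` is a
`(1+ε,β)`-hopset for `G`. -/
theorem stmt_2 {V S : Type*} [Fintype V] [DecidableEq V] [Nonempty V]
    (wG wH : V → V → ℝ≥0∞) (hGdiag : ∀ v, wG v v = 0)
    (hHge : ∀ u v, gDist wG u v ≤ wH u v)
    (ε : ℝ≥0∞) (β : ℕ) (hβ : 1 ≤ β)
    (hhopset : ∀ u v,
      gDist wG u v ≤ hopDist (fun a b => min (wG a b) (wH a b)) β u v ∧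
        hopDist (fun a b => min (wG a b) (wH a b)) β u v ≤ (1 + ε) * gDist wG u v)
    (f : S → V) (R : ℝ≥0∞) (hR : 1 ≤ R)
    (B : ℕ → S → V → ℝ≥0∞)
    (hB1 : ∀ i j, B 1 i j = min (wG (f i) j) (wH (f i) j))
    (hBstep : ∀ t, 1 ≤ t → ∀ i j,
      (⨅ k, B t i k + min (wG k j) (wH k j)) ≤ B (t + 1) i j ∧
        B (t + 1) i j ≤ (1 + 1 / R) * ⨅ k, B t i k + min (wG k j) (wH k j)) :
    ∀ i j, gDist wG (f i) j ≤ B β i j ∧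
      B β i j ≤ (1 + 1 / R) ^ (β - 1) * (1 + ε) * gDist wG (f i) j := by
  set wA : V → V → ℝ≥0∞ := fun a b => min (wG a b) (wH a b) with hwA
  set c : ℝ≥0∞ := 1 + 1 / R with hc
  have hc1 : (1 : ℝ≥0∞) ≤ c := le_self_add
  have hcp : ∀ n : ℕ, (1 : ℝ≥0∞) ≤ c ^ n := fun n => one_le_pow_of_one_le' hc1 n
  have hgA : ∀ u v, gDist wG u v ≤ wA u v := fun u v =>
    le_min (gDist_le_w wG u v) (hHge u v)
  have hAdiag : ∀ v, wA v v = 0 := fun v => by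
    simp [hwA, hGdiag v]
  -- key induction
  have key : ∀ t, 1 ≤ t → ∀ i j, gDist wG (f i) j ≤ B t i j ∧
      B t i j ≤ c ^ (t - 1) * hopDist wA t (f i) j := by
    intro t ht
    induction t, ht using Nat.le_induction with
    | base =>
      intro i j
      constructor
      · rw [hB1]; exact hgA _ _
      · rw [hB1]
        simp only [Nat.sub_self, pow_zero, one_mul]
        show wA (f i) j ≤ hopDist wA 1 (f i) j
        show wA (f i) j ≤ min _ _
        refine le_min ?_ (le_iInf fun k => ?_)
        · by_cases h : f i = j
          · subst h
            simp only [hopDist, if_pos rfl, if_true, hAdiag (f i), le_refl]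
          · simp only [hopDist, if_neg h, le_top]
        · by_cases h : f i = k
          · subst h
            simp only [hopDist, if_pos rfl, if_true, zero_add, le_refl]
          · simp only [hopDist, if_neg h, top_add, le_top]
    | succ t ht ih =>
      intro i j
      have hlow := (hBstep t ht i j).1
      have hup := (hBstep t ht i j).2
      constructor
      · refine le_trans ?_ hlow
        refine le_iInf fun k => ?_
        exact (gDist_triangle wG (f i) k j).trans
          (add_le_add ((ih i k).1) (hgA k j))
      · -- upper bound
        have hinf : (⨅ k, B t i k + wA k j) ≤ c ^ (t - 1) * hopDist wA (t + 1) (f i) j := by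
          show _ ≤ c ^ (t-1) * min _ _
          rcases le_total (hopDist wA t (f i) j) (⨅ k, hopDist wA t (f i) k + wA k j)
            with h | h
          · rw [min_eq_left h]
            refine (iInf_le _ j).trans ?_
            rw [hAdiag j, add_zero]
            exact (ih i j).2
          · rw [min_eq_right h]
            obtain ⟨k0, hk0⟩ := Finite.exists_min fun k => hopDist wA t (f i) k + wA k j
            have hinf_eq : (⨅ k, hopDist wA t (f i) k + wA k j)
                = hopDist wA t (f i) k0 + wA k0 j :=
              le_antisymm (iInf_le _ k0) (le_iInf hk0)
            rw [hinf_eq]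
            refine (iInf_le _ k0).trans ?_
            rw [mul_add]
            exact add_le_add ((ih i k0).2)
              (le_mul_of_one_le_left (by positivity) (hcp _))
        calc B (t+1) i j ≤ c * ⨅ k, B t i k + wA k j := hup
          _ ≤ c * (c ^ (t - 1) * hopDist wA (t + 1) (f i) j) :=
              by gcongr
          _ = c ^ (t + 1 - 1) * hopDist wA (t + 1) (f i) j := by
              rw [← mul_assoc, ← pow_succ', Nat.sub_add_cancel ht,
                Nat.add_sub_cancel]
  intro i j
  refine ⟨(key β hβ i j).1, ?_⟩
  calc B β i j ≤ c ^ (β - 1) * hopDist wA β (f i) j := (key β hβ i j).2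
    _ ≤ c ^ (β - 1) * ((1 + ε) * gDist wG (f i) j) :=
        by gcongr; exact (hhopset (f i) j).2
    _ = c ^ (β - 1) * (1 + ε) * gDist wG (f i) j := by rw [mul_assoc]
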